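/- Let e_1,…,e_n be arbitrary nonnegative real numbers, let α ∈ (0,1), and let 𝓗₀ ⊆ {1,…,n} be any subset. Then, deterministically, the false discovery proportion of the e-BH procedure applied to e_1,…,e_n at level α satisfies FDP ≤ (α/n) · Σ_{i∈𝓗₀} e_i. -/

import Mathlib

open Finset
open scoped Classical

/-- The e-BH cutoff `k̂ = max{1 ≤ k ≤ n : e₍ₖ₎ ≥ n/(kα)}`, expressed via the
equivalent condition that at least `k` of the e-values are `≥ n/(kα)`;
`k̂ = 0` when the set is empty. -/
noncomputable def eBHkhat (n : ℕ) (α : ℝ) (e : Fin n → ℝ) : ℕ :=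
  sSup {k : ℕ | 1 ≤ k ∧ k ≤ n ∧
    k ≤ (Finset.univ.filter (fun i => (n : ℝ) / ((k : ℝ) * α) ≤ e i)).card}

/-- The rejection set of the e-BH procedure at level `α`: the hypotheses whose
e-values are `≥ n/(k̂α)` (no rejections if `k̂ = 0`). -/
noncomputable def eBHreject (n : ℕ) (α : ℝ) (e : Fin n → ℝ) : Finset (Fin n) :=
  if eBHkhat n α e = 0 then ∅
  else Finset.univ.filter (fun i => (n : ℝ) / ((eBHkhat n α e : ℝ) * α) ≤ e i)

/-- False discovery proportion of a rejection set `R` with null set `H0`. -/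
noncomputable def FDP (n : ℕ) (H0 R : Finset (Fin n)) : ℝ :=
  ((R ∩ H0).card : ℝ) / max 1 (R.card : ℝ)

/-- deterministically, the FDP of the e-BH procedure applied to
nonnegative numbers `e₁,…,eₙ` at level `α ∈ (0,1)` is at most `(α/n)·∑_{i∈H0} eᵢ`. -/
theorem ebh_fdp_bound (n : ℕ) (α : ℝ) (hα : 0 < α ∧ α < 1)
    (e : Fin n → ℝ) (he : ∀ i, 0 ≤ e i) (H0 : Finset (Fin n)) :
    FDP n H0 (eBHreject n α e) ≤ α / n * ∑ i ∈ H0, e i := by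
  obtain ⟨hα0, hα1⟩ := hα
  have hT : 0 ≤ ∑ i ∈ H0, e i := Finset.sum_nonneg fun i _ => he i
  have hRHS : 0 ≤ α / n * ∑ i ∈ H0, e i := by positivity
  by_cases h0 : eBHkhat n α e = 0
  · simp [FDP, eBHreject, h0]
    positivity
  · -- K = k̂ is in the defining set
    set K := eBHkhat n α e with hKdef
    have hbdd : BddAbove {k : ℕ | 1 ≤ k ∧ k ≤ n ∧
        k ≤ (Finset.univ.filter (fun i => (n : ℝ) / ((k : ℝ) * α) ≤ e i)).card} :=
      ⟨n, fun k hk => hk.2.1⟩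
    have hne : {k : ℕ | 1 ≤ k ∧ k ≤ n ∧
        k ≤ (Finset.univ.filter (fun i => (n : ℝ) / ((k : ℝ) * α) ≤ e i)).card}.Nonempty := by
      by_contra hcon
      rw [Set.not_nonempty_iff_eq_empty] at hcon
      exact h0 (by simp [hKdef, eBHkhat, hcon])
    have hK : K ∈ {k : ℕ | 1 ≤ k ∧ k ≤ n ∧
        k ≤ (Finset.univ.filter (fun i => (n : ℝ) / ((k : ℝ) * α) ≤ e i)).card} :=
      Nat.sSup_mem hne hbdd
    obtain ⟨hK1, hKn, hKcard⟩ := hK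
    set R := Finset.univ.filter (fun i => (n : ℝ) / ((K : ℝ) * α) ≤ e i) with hRdef
    have hReq : eBHreject n α e = R := by simp [eBHreject, ← hKdef, h0, hRdef]
    have hKR : K ≤ R.card := hKcard
    have hKpos : (0 : ℝ) < K := by exact_mod_cast hK1
    have hnpos : (0 : ℝ) < n := by exact_mod_cast Nat.lt_of_lt_of_le hK1 hKn
    have hKa : (0 : ℝ) < (K : ℝ) * α := mul_pos hKpos hα0
    set c : ℝ := (n : ℝ) / ((K : ℝ) * α) with hc
    set m : ℝ := ((R ∩ H0).card : ℝ) with hm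
    have hm0 : (0 : ℝ) ≤ m := by positivity
    -- each rejected null has e i ≥ c
    have hmc : m * c ≤ ∑ i ∈ H0, e i := by
      have h1 : ∀ i ∈ R ∩ H0, c ≤ e i := by
        intro i hi
        have := Finset.mem_inter.mp hi
        exact (Finset.mem_filter.mp this.1).2
      have h2 : ∑ _i ∈ R ∩ H0, c ≤ ∑ i ∈ R ∩ H0, e i := Finset.sum_le_sum h1
      have h3 : ∑ i ∈ R ∩ H0, e i ≤ ∑ i ∈ H0, e i :=
        Finset.sum_le_sum_of_subset_of_nonneg Finset.inter_subset_right
          (fun i _ _ => he i)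
      calc m * c = ∑ _i ∈ R ∩ H0, c := by rw [Finset.sum_const, nsmul_eq_mul, hm]
        _ ≤ _ := le_trans h2 h3
    have key : m * n ≤ (∑ i ∈ H0, e i) * ((K : ℝ) * α) := by
      have h := mul_le_mul_of_nonneg_right hmc (le_of_lt hKa)
      calc m * n = m * c * ((K : ℝ) * α) := by rw [hc]; field_simp
        _ ≤ _ := h
    have hKRr : (K : ℝ) ≤ (R.card : ℝ) := by exact_mod_cast hKR
    have hmax : max 1 ((R.card : ℝ)) = (R.card : ℝ) :=
      max_eq_right (le_trans (by exact_mod_cast hK1) hKRr)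
    rw [hReq]
    unfold FDP
    rw [hmax, ← hm]
    calc m / (R.card : ℝ) ≤ m / (K : ℝ) :=
          div_le_div_of_nonneg_left hm0 hKpos hKRr
      _ ≤ α / n * ∑ i ∈ H0, e i := by
          rw [div_le_iff₀ hKpos, show α / n * (∑ i ∈ H0, e i) * K
              = (∑ i ∈ H0, e i) * (K * α) / n by ring, le_div_iff₀ hnpos]
          linarith [key]
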